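/- The Eulerian polynomial A_n(t) = Σ_{w ∈ S_n} t^{des(w)} equals Σ_{w ∈ S̃_n} t^{des(w)} (1+t)^{n-1-2·des(w)}, where S̃_n is the set of permutations in S_n with no double descent and no initial descent. -/

import Mathlib

open Finset Polynomial

open scoped Classical

noncomputable section

/-- The letter (0-based) at 0-based position `i` in the one-line notation of `w`
(junk value `0` out of range). -/
def ol (n : ℕ) (w : Equiv.Perm (Fin n)) (i : ℕ) : ℕ :=
  if h : i < n then (w ⟨i, h⟩ : ℕ) else 0

/-- The descent set of `w`, with 0-based positions: `i ∈ DesSet n w` (for `i ≤ n-2`)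
means `w(i) > w(i+1)`.  (This is the paper's descent `i+1 ∈ [n-1]`.) -/
def DesSet (n : ℕ) (w : Equiv.Perm (Fin n)) : Finset ℕ :=
  (Finset.range (n - 1)).filter fun i => ol n w (i + 1) < ol n w i

/-- The number of descents of `w`. -/
def des (n : ℕ) (w : Equiv.Perm (Fin n)) : ℕ := (DesSet n w).card

/-- `w` has no double descent: no two consecutive descent positions. -/
def NoDoubleDescent (n : ℕ) (w : Equiv.Perm (Fin n)) : Prop :=
  ∀ i ∈ DesSet n w, i + 1 ∉ DesSet n w

/-- `w` has no initial descent (no descent at the first position). -/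
def NoInitialDescent (n : ℕ) (w : Equiv.Perm (Fin n)) : Prop := 0 ∉ DesSet n w

/-- `w` has no final descent (no descent at the last position, paper's `n-1`). -/
def NoFinalDescent (n : ℕ) (w : Equiv.Perm (Fin n)) : Prop := n - 2 ∉ DesSet n w

/-- The involution `w ↦ w*`, `w*(i) = n+1-w(n+1-i)` in 1-based notation. -/
def starPerm (n : ℕ) (w : Equiv.Perm (Fin n)) : Equiv.Perm (Fin n) :=
  (Fin.revPerm.trans w).trans Fin.revPerm

/-- The letter at 1-based position `i ∈ [1,n]` of `w`, as an element of `ℕ∞`,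
with the boundary convention `w(0) = w(n+1) = ⊤`. -/
def olb (n : ℕ) (w : Equiv.Perm (Fin n)) (i : ℕ) : ℕ∞ :=
  if h : 1 ≤ i ∧ i ≤ n then ((w ⟨i - 1, by omega⟩ : ℕ) : ℕ∞) else ⊤

/-- 1-based position `i` is a peak of `w` : `w(i-1) < w(i) > w(i+1)` (boundaries `⊤`,
so positions `1` and `n` are never peaks). -/
def IsPeak (n : ℕ) (w : Equiv.Perm (Fin n)) (i : ℕ) : Prop :=
  olb n w (i - 1) < olb n w i ∧ olb n w (i + 1) < olb n w i

/-- 1-based position `i` is a valley of `w` : `w(i-1) > w(i) < w(i+1)`. -/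
def IsValley (n : ℕ) (w : Equiv.Perm (Fin n)) (i : ℕ) : Prop :=
  olb n w i < olb n w (i - 1) ∧ olb n w i < olb n w (i + 1)

/-- 1-based position `i` holds a free letter of `w` : neither a peak nor a valley. -/
def IsFree (n : ℕ) (w : Equiv.Perm (Fin n)) (i : ℕ) : Prop :=
  ¬ IsPeak n w i ∧ ¬ IsValley n w i

/-- The number of peaks of `w`. -/
def pk (n : ℕ) (w : Equiv.Perm (Fin n)) : ℕ :=
  ((Finset.Icc 1 n).filter (IsPeak n w)).card

/-- The number of inversions of `w`, i.e. its Coxeter length. -/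
def invNum (n : ℕ) (w : Equiv.Perm (Fin n)) : ℕ :=
  (Finset.univ.filter fun p : Fin n × Fin n => p.1 < p.2 ∧ w p.2 < w p.1).card

/-- The standard parabolic subgroup `W_K` of `S_n` generated by the adjacent
transpositions `(k, k+1)` (1-based letters `k ∈ K`, i.e. 0-based `k-1`, `k`). -/
def WK (n : ℕ) (K : Finset ℕ) : Subgroup (Equiv.Perm (Fin n)) :=
  Subgroup.closure { s | ∃ k ∈ K, ∃ hk : k < n,
    s = Equiv.swap (⟨k - 1, lt_of_le_of_lt (Nat.sub_le k 1) hk⟩ : Fin n) ⟨k, hk⟩ }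

/-- The set `W^K` of permutations in which, for every `k ∈ K`, the letter `k`
appears before the letter `k+1` (1-based letters; these are the minimal-length
coset representatives of `W_K`). -/
def WKreps (n : ℕ) (K : Finset ℕ) : Finset (Equiv.Perm (Fin n)) :=
  Finset.univ.filter fun w => ∀ k ∈ K, ∀ hk : k < n,
    w⁻¹ (⟨k - 1, lt_of_le_of_lt (Nat.sub_le k 1) hk⟩ : Fin n) < w⁻¹ ⟨k, hk⟩

/-- The set `W(K) = { v ∈ S_n : v⁻¹(k) − v⁻¹(k+1) ≤ 1 for all k ∈ K }`
(1-based letters `k`, `k+1`). -/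
def Wset (n : ℕ) (K : Finset ℕ) : Finset (Equiv.Perm (Fin n)) :=
  Finset.univ.filter fun v => ∀ k ∈ K, ∀ hk : k < n,
    ((v⁻¹ (⟨k - 1, lt_of_le_of_lt (Nat.sub_le k 1) hk⟩ : Fin n) : Fin n) : ℕ) ≤
      ((v⁻¹ (⟨k, hk⟩ : Fin n) : Fin n) : ℕ) + 1

/-- The orbit of `i` under the action of `W_K` on positions/letters. -/
def orbitFinset (n : ℕ) (K : Finset ℕ) (i : Fin n) : Finset (Fin n) :=
  Finset.univ.filter fun j => ∃ u ∈ WK n K, u i = j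

/-- The set of orbits of `W_K` on `[n]`. -/
def orbitsFinset (n : ℕ) (K : Finset ℕ) : Finset (Finset (Fin n)) :=
  Finset.univ.image (orbitFinset n K)

/-- The one-line notation of `w` as a list of (0-based) letters. -/
def word (n : ℕ) (w : Equiv.Perm (Fin n)) : List ℕ := List.ofFn fun i => (w i : ℕ)

/-- A single valley hop of the free letter `j` from a downslope (in `v`) to the
nearest upslope of the same height (giving `u`): `j` moves rightwards directly
across the adjacent valley `B`. -/
def hopStep (v u : List ℕ) : Prop :=
  ∃ (A B C : List ℕ) (j : ℕ), B ≠ [] ∧ (∀ x ∈ B, x < j) ∧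
    (∀ x ∈ A.getLast?, j < x) ∧ (∀ x ∈ C.head?, j < x) ∧
    v = A ++ j :: (B ++ C) ∧ u = A ++ (B ++ j :: C)

/-- Hop equivalence (valley hopping) on `S_n`: the equivalence closure of single
hops of free letters. -/
def hopEquiv (n : ℕ) (a b : Equiv.Perm (Fin n)) : Prop :=
  Relation.EqvGen (fun x y : Equiv.Perm (Fin n) => hopStep (word n x) (word n y)) a b

/-- The index (1-based) of the `W_K`-orbit containing the letter `x ∈ [1,n]`:
orbits are consecutive intervals, numbered from the left. -/
def orbIdx (K : Finset ℕ) (x : ℕ) : ℕ :=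
  1 + ((Finset.Icc 1 (x - 1)).filter fun t => t ∉ K).card

/-- The (0-based) descent set of a word `v` of length `n`. -/
def wdes (n : ℕ) (v : Fin n → ℕ) : Finset ℕ :=
  (Finset.range (n - 1)).filter fun i =>
    if h : i + 1 < n then v ⟨i + 1, h⟩ < v ⟨i, by omega⟩ else False

/-- The word `v` has content `μ(K)`: for each `i`, the number of letters of `v`
equal to `i` is the size of the `i`-th orbit of `W_K` on `[1,n]`. -/
def HasContent (n : ℕ) (K : Finset ℕ) (v : Fin n → ℕ) : Prop :=
  ∀ i : ℕ, (Finset.univ.filter fun j => v j = i).card =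
    ((Finset.Icc 1 n).filter fun x => orbIdx K x = i).card

/-- `w` is the standardization `φ(v)` of the word `v`: `w` orders positions by
letter value, breaking ties from left to right.  (This is exactly the map `φ`
of the paper: if `j` is the `k`-th smallest position with `v(j) = i`, then
`φ(v)(j) = k + μ₁ + ⋯ + μ_{i-1}`.) -/
def IsStd (n : ℕ) (v : Fin n → ℕ) (w : Equiv.Perm (Fin n)) : Prop :=
  ∀ j j' : Fin n, w j < w j' ↔ (v j < v j' ∨ (v j = v j' ∧ j < j'))

namespace EGT

def ldes : List ℕ → ℕ
  | a :: b :: t => (if b < a then 1 else 0) + ldes (b :: t)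
  | _ => 0

def nid : List ℕ → Prop
  | a :: b :: _ => ¬ b < a
  | _ => True

def ndd : List ℕ → Prop
  | a :: b :: c :: t => ¬ (c < b ∧ b < a) ∧ ndd (b :: c :: t)
  | _ => True

def good (l : List ℕ) : Prop := nid l ∧ ndd l

lemma ldes_cons (a : ℕ) (l : List ℕ) :
    ldes (a :: l) = (match l with | b :: _ => if b < a then 1 else 0 | [] => 0) + ldes l := by
  rcases l with _ | ⟨b, t⟩ <;> simp [ldes]

lemma ndd_cons (a : ℕ) (l : List ℕ) :
    ndd (a :: l) ↔ (∀ b c t, l = b :: c :: t → ¬ (c < b ∧ b < a)) ∧ ndd l := by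
  rcases l with _ | ⟨b, _ | ⟨c, t⟩⟩ <;> simp [ndd]

lemma ndd_tail {a : ℕ} {l : List ℕ} (h : ndd (a :: l)) : ndd l :=
  ((ndd_cons a l).1 h).2

lemma good_nil : good [] := ⟨trivial, trivial⟩

lemma good_singleton (a : ℕ) : good [a] := ⟨trivial, trivial⟩

lemma ldes_append {A B : List ℕ} {M : ℕ} (hA : ∀ x ∈ A, x < M) (hB : ∀ x ∈ B, x < M) :
    ldes (A ++ M :: B) = ldes A + ldes B + (if B = [] then 0 else 1) := by
  induction A with
  | nil =>
    rcases B with _ | ⟨b, t⟩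
    · simp [ldes]
    · have : b < M := hB b (by simp)
      simp [ldes_cons, ldes, this]
      omega
  | cons a A ih =>
    have hA' : ∀ x ∈ A, x < M := fun x hx => hA x (List.mem_cons_of_mem _ hx)
    have ham : a < M := hA a List.mem_cons_self
    rw [List.cons_append, ldes_cons, ih hA', ldes_cons]
    rcases A with _ | ⟨d, t⟩
    · simp [Nat.not_lt.mpr ham.le]
    · simp; omega

lemma ndd_append {A B : List ℕ} {M : ℕ} (hA : ∀ x ∈ A, x < M) (hB : ∀ x ∈ B, x < M) :
    ndd (A ++ M :: B) ↔ ndd A ∧ good B := by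
  induction A with
  | nil =>
    rcases B with _ | ⟨b, _ | ⟨c, t⟩⟩
    · simp [ndd, good, nid]
    · simp [ndd, good, nid]
    · have hb : b < M := hB b (by simp)
      simp only [List.nil_append, ndd, good, nid]
      constructor
      · rintro ⟨h1, h2⟩
        exact ⟨trivial, fun hc => (h1 ⟨hc, hb⟩), h2⟩
      · rintro ⟨-, h1, h2⟩
        exact ⟨fun h => h1 h.1, h2⟩
  | cons a A ih =>
    have hA' : ∀ x ∈ A, x < M := fun x hx => hA x (List.mem_cons_of_mem _ hx)
    have ham : a < M := hA a List.mem_cons_self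
    rw [List.cons_append, ndd_cons, ih hA', ndd_cons]
    constructor
    · rintro ⟨h1, h2, h3⟩
      refine ⟨⟨?_, h2⟩, h3⟩
      intro b c t ht
      exact h1 b c (t ++ M :: B) (by rw [ht]; simp)
    · rintro ⟨⟨h1, h2⟩, h3⟩
      refine ⟨?_, h2, h3⟩
      intro b c t ht
      rcases A with _ | ⟨d, _ | ⟨e, t'⟩⟩
      · simp only [List.nil_append, List.cons.injEq] at ht
        rintro ⟨hc, hb⟩
        omega
      · simp only [List.cons_append, List.nil_append, List.cons.injEq] at ht
        have hd : d < M := hA' d (by simp)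
        rintro ⟨hc, hb⟩
        omega
      · simp only [List.cons_append, List.cons.injEq] at ht
        exact ht.1 ▸ ht.2.1 ▸ h1 d e t' rfl

lemma nid_append {A B : List ℕ} {M : ℕ} (hA : ∀ x ∈ A, x < M) (hB : ∀ x ∈ B, x < M) :
    nid (A ++ M :: B) ↔ (A = [] → B = []) ∧ nid A := by
  rcases A with _ | ⟨a, _ | ⟨c, t⟩⟩
  · rcases B with _ | ⟨b, t⟩
    · simp [nid]
    · have : b < M := hB b (by simp)
      simp [nid, this]
  · have : a < M := hA a (by simp)
    simp [nid, this, Nat.not_lt.mpr this.le]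
  · have : a < M := hA a (by simp)
    simp [nid]

lemma good_append {A B : List ℕ} {M : ℕ} (hA : ∀ x ∈ A, x < M) (hB : ∀ x ∈ B, x < M) :
    good (A ++ M :: B) ↔ good A ∧ good B ∧ (B ≠ [] → A ≠ []) := by
  unfold good
  rw [nid_append hA hB, ndd_append hA hB]
  constructor
  · rintro ⟨⟨h1, h2⟩, h3, h4⟩
    exact ⟨⟨h2, h3⟩, h4, fun hb ha => hb (h1 ha)⟩
  · rintro ⟨⟨h1, h2⟩, h3, h4⟩
    refine ⟨⟨?_, h1⟩, h2, h3⟩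
    intro ha
    by_contra hb
    exact h4 hb ha

lemma ndd_bound_aux : ∀ (n : ℕ) (l : List ℕ), l.length ≤ n → ndd l → 2 * ldes l ≤ l.length := by
  intro n
  induction n with
  | zero => intro l hl _; interval_cases h : l.length <;> simp_all [List.length_eq_zero_iff.mp h, ldes]
  | succ n ih =>
    intro l hl
    have ihl : ∀ m : List ℕ, m.length < l.length → ndd m → 2 * ldes m ≤ m.length :=
      fun m hm => ih m (by omega)
    rcases l with _ | ⟨a, _ | ⟨b, t⟩⟩
    · simp [ldes]
    · simp [ldes]
    · intro h
      rcases Nat.lt_or_ge b a with hba | hba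
      · rcases t with _ | ⟨c, t'⟩
        · simp [ldes, hba]
        · have h1 : ¬ c < b := fun hc => (h.1 ⟨hc, hba⟩)
          have h2 : ndd (c :: t') := ndd_tail (ndd_tail h)
          have := ihl (c :: t') (by simp) h2
          simp only [ldes, if_pos hba, if_neg h1] at *
          simp at this ⊢
          omega
      · have h2 : ndd (b :: t) := ndd_tail h
        have := ihl (b :: t) (by simp) h2
        simp only [ldes, if_neg (Nat.not_lt.mpr hba)] at *
        simp at this ⊢
        omega

lemma ndd_bound {l : List ℕ} (h : ndd l) : 2 * ldes l ≤ l.length :=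
  ndd_bound_aux l.length l le_rfl h

lemma good_bound {l : List ℕ} (h : good l) (hne : l ≠ []) : 2 * ldes l + 1 ≤ l.length := by
  rcases l with _ | ⟨a, _ | ⟨b, t⟩⟩
  · exact absurd rfl hne
  · simp [ldes]
  · have h1 : ¬ b < a := h.1
    have h2 : ndd (b :: t) := ndd_tail h.2
    have := ndd_bound h2
    simp only [ldes, if_neg h1] at *
    simp at this ⊢
    omega

/-- index-based descent set of a list -/
def dsetL (l : List ℕ) : Finset ℕ :=
  (Finset.range (l.length - 1)).filter fun i => l.getD (i+1) 0 < l.getD i 0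

lemma mem_dsetL_cons_succ {a : ℕ} {l : List ℕ} (i : ℕ) :
    i + 1 ∈ dsetL (a :: l) ↔ i ∈ dsetL l := by
  simp only [dsetL, Finset.mem_filter, Finset.mem_range, List.getD_cons_succ, List.length_cons]
  omega

lemma mem_dsetL_zero {a : ℕ} {l : List ℕ} :
    0 ∈ dsetL (a :: l) ↔ l.getD 0 0 < a ∧ l ≠ [] := by
  simp only [dsetL, Finset.mem_filter, Finset.mem_range, List.getD_cons_succ, List.getD_cons_zero,
    List.length_cons]
  rcases l with _ | ⟨b, t⟩ <;> simp

lemma ldes_eq_card (l : List ℕ) : ldes l = (dsetL l).card := by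
  induction l with
  | nil => simp [ldes, dsetL]
  | cons a t ih =>
    rcases t with _ | ⟨b, t'⟩
    · simp [ldes, dsetL]
    · rw [ldes_cons, ih]
      unfold dsetL
      rw [Finset.card_filter, Finset.card_filter]
      simp only [List.length_cons, Nat.add_sub_cancel]
      rw [Finset.sum_range_succ']
      simp only [List.getD_cons_succ, List.getD_cons_zero]
      omega

lemma nid_iff (l : List ℕ) : nid l ↔ 0 ∉ dsetL l := by
  rcases l with _ | ⟨a, _ | ⟨b, t⟩⟩
  · simp [nid, dsetL]
  · simp [nid, dsetL]
  · rw [mem_dsetL_zero]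
    simp [nid]

lemma ndd_iff (l : List ℕ) : ndd l ↔ ∀ i ∈ dsetL l, i + 1 ∉ dsetL l := by
  induction l with
  | nil => simp [ndd, dsetL]
  | cons a t ih =>
    rw [ndd_cons, ih]
    constructor
    · rintro ⟨h1, h2⟩
      intro i hi
      rcases i with _ | j
      · rw [mem_dsetL_zero] at hi
        rw [mem_dsetL_cons_succ]
        rcases t with _ | ⟨b, _ | ⟨c, t'⟩⟩
        · simp at hi
        · simp [dsetL]
        · rw [mem_dsetL_zero]
          rintro ⟨hc, -⟩
          simp only [List.getD_cons_zero] at hi hc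
          exact h1 b c t' rfl ⟨hc, hi.1⟩
      · rw [mem_dsetL_cons_succ] at hi
        rw [mem_dsetL_cons_succ]
        exact h2 j hi
    · intro h
      constructor
      · rintro b c t' rfl ⟨hc, hb⟩
        have h0 : 0 ∈ dsetL (a :: b :: c :: t') := by
          rw [mem_dsetL_zero]; simpa using hb
        have := h 0 h0
        rw [mem_dsetL_cons_succ, mem_dsetL_zero] at this
        exact this ⟨by simpa using hc, by simp⟩
      · intro i hi
        have := h (i+1) ((mem_dsetL_cons_succ i).mpr hi)
        rw [mem_dsetL_cons_succ] at this
        exact this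

lemma good_iff (l : List ℕ) :
    good l ↔ (∀ i ∈ dsetL l, i + 1 ∉ dsetL l) ∧ 0 ∉ dsetL l := by
  rw [good, nid_iff, ndd_iff]; tauto

/-- permutation lists of a finset -/
def permsOf (S : Finset ℕ) : Finset (List ℕ) := (S.sort (· ≤ ·)).permutations.toFinset

lemma mem_permsOf {S : Finset ℕ} {l : List ℕ} :
    l ∈ permsOf S ↔ l.Nodup ∧ l.toFinset = S := by
  rw [permsOf, List.mem_toFinset, List.mem_permutations]
  constructor
  · intro h
    have hn : l.Nodup := h.nodup_iff.mpr (Finset.sort_nodup _ _)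
    refine ⟨hn, ?_⟩
    rw [← Finset.sort_toFinset (s := S) (r := (· ≤ ·))]
    ext x
    simp [List.mem_toFinset, h.mem_iff]
  · rintro ⟨hn, ht⟩
    exact List.perm_of_nodup_nodup_toFinset_eq hn (Finset.sort_nodup _ _)
      (by rw [ht, Finset.sort_toFinset])

lemma permsOf_empty : permsOf (∅ : Finset ℕ) = {[]} := by
  ext l
  rw [mem_permsOf]
  simp only [List.toFinset_eq_empty_iff, Finset.mem_singleton]
  constructor
  · tauto
  · rintro rfl; simp

lemma length_mem_permsOf {S : Finset ℕ} {l : List ℕ} (h : l ∈ permsOf S) :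
    l.length = S.card := by
  rw [mem_permsOf] at h
  rw [← h.2, List.toFinset_card_of_nodup h.1]

lemma eq_nil_iff_permsOf {S : Finset ℕ} {l : List ℕ} (h : l ∈ permsOf S) :
    l = [] ↔ S = ∅ := by
  rw [mem_permsOf] at h
  rw [← h.2]
  simp [List.toFinset_eq_empty_iff]

lemma takeWhile_ne_append {M : ℕ} : ∀ (A : List ℕ), (∀ x ∈ A, x ≠ M) → ∀ B : List ℕ,
    (A ++ M :: B).takeWhile (· != M) = A ∧ (A ++ M :: B).dropWhile (· != M) = M :: B := by
  intro A
  induction A with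
  | nil =>
    intro _ B
    constructor <;> simp [List.takeWhile_cons, List.dropWhile_cons]
  | cons a A ih =>
    intro hA B
    have ha : (a != M) = true := by
      simpa using hA a (by simp)
    have := ih (fun x hx => hA x (List.mem_cons_of_mem _ hx)) B
    constructor
    · rw [List.cons_append, List.takeWhile_cons, if_pos ha, this.1]
    · rw [List.cons_append, List.dropWhile_cons, if_pos ha, this.2]

/-- reconstruction of a nodup list containing M -/
lemma exists_decomp {l : List ℕ} {M : ℕ} (hn : l.Nodup) (hM : M ∈ l) :
    ∃ A B : List ℕ, l = A ++ M :: B ∧ A = l.takeWhile (· != M) ∧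
      B = (l.dropWhile (· != M)).tail := by
  obtain ⟨A, B, rfl⟩ := List.append_of_mem hM
  have hMA : ∀ x ∈ A, x ≠ M := by
    intro x hx hxM
    subst hxM
    rw [List.nodup_append] at hn
    exact hn.2.2 x hx x (by simp) rfl
  have h := takeWhile_ne_append A hMA B
  exact ⟨A, B, rfl, h.1.symm, by rw [h.2]; rfl⟩

lemma sum_split (S : Finset ℕ) (hS : S.Nonempty) (f : List ℕ → Polynomial ℕ) :
    ∑ l ∈ permsOf S, f l =
      ∑ S₁ ∈ (S.erase (S.max' hS)).powerset, ∑ A ∈ permsOf S₁,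
        ∑ B ∈ permsOf ((S.erase (S.max' hS)) \ S₁), f (A ++ S.max' hS :: B) := by
  set M := S.max' hS with hMdef
  set S' := S.erase M with hS'def
  have hMS : M ∈ S := S.max'_mem hS
  have hMS' : M ∉ S' := Finset.notMem_erase _ _
  have step : ∀ S₁ ∈ S'.powerset,
      (∑ A ∈ permsOf S₁, ∑ B ∈ permsOf (S' \ S₁), f (A ++ M :: B))
      = ∑ p ∈ permsOf S₁ ×ˢ permsOf (S' \ S₁), f (p.1 ++ M :: p.2) := by
    intro S₁ _
    rw [Finset.sum_product]
  rw [Finset.sum_congr rfl step, ← Finset.sum_sigma S'.powerset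
    (fun S₁ => permsOf S₁ ×ˢ permsOf (S' \ S₁)) (fun x => f (x.2.1 ++ M :: x.2.2))]
  refine (Finset.sum_nbij' (fun p : Σ _ : Finset ℕ, List ℕ × List ℕ => p.2.1 ++ M :: p.2.2)
    (fun l => ⟨(l.takeWhile (· != M)).toFinset,
      (l.takeWhile (· != M), (l.dropWhile (· != M)).tail)⟩) ?_ ?_ ?_ ?_ ?_).symm
  · -- forward membership
    rintro ⟨S₁, A, B⟩ hp
    simp only [Finset.mem_sigma, Finset.mem_powerset, Finset.mem_product] at hp
    obtain ⟨hsub, hA, hB⟩ := hp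
    rw [mem_permsOf] at hA hB
    obtain ⟨hAn, hAt⟩ := hA
    obtain ⟨hBn, hBt⟩ := hB
    dsimp only
    have hAS' : ∀ x ∈ A, x ∈ S' := fun x hx => hsub (hAt ▸ List.mem_toFinset.mpr hx)
    have hBS' : ∀ x ∈ B, x ∈ S' \ S₁ := fun x hx => hBt ▸ List.mem_toFinset.mpr hx
    rw [mem_permsOf]
    constructor
    · rw [List.nodup_append]
      refine ⟨hAn, ?_, ?_⟩
      · rw [List.nodup_cons]
        refine ⟨fun hMB => hMS' (Finset.mem_sdiff.mp (hBS' M hMB)).1, hBn⟩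
      · intro x hxA y hxMB hxy; subst hxy
        rcases List.mem_cons.mp hxMB with rfl | hxB
        · exact hMS' (hAS' _ hxA)
        · exact (Finset.mem_sdiff.mp (hBS' x hxB)).2 (hAt ▸ List.mem_toFinset.mpr hxA)
    · rw [List.toFinset_append, List.toFinset_cons, hAt, hBt, Finset.union_insert,
        Finset.union_sdiff_of_subset hsub, hS'def, Finset.insert_erase hMS]
  · -- backward membership
    intro l hl
    rw [mem_permsOf] at hl
    obtain ⟨hn, ht⟩ := hl
    have hMl : M ∈ l := by rw [← List.mem_toFinset, ht]; exact hMS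
    obtain ⟨A, B, hdec, hAtw, hBdw⟩ := exists_decomp hn hMl
    simp only [Finset.mem_sigma, Finset.mem_powerset, Finset.mem_product]
    rw [hdec, List.nodup_append, List.nodup_cons] at hn
    obtain ⟨hAn, ⟨hMB, hBn⟩, hdisj⟩ := hn
    have hMA : M ∉ A := fun h => hdisj M h M (by simp) rfl
    have hts : A.toFinset ∪ insert M B.toFinset = S := by
      rw [← List.toFinset_cons, ← List.toFinset_append, ← hdec, ht]
    refine ⟨?_, ?_, ?_⟩
    · rw [← hAtw]
      intro x hx
      rw [List.mem_toFinset] at hx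
      rw [hS'def, Finset.mem_erase]
      refine ⟨fun h => hdisj x hx M (by simp) h, ?_⟩
      rw [← ht, hdec]
      simp [hx]
    · rw [mem_permsOf, ← hAtw]
      exact ⟨hAn, rfl⟩
    · rw [mem_permsOf, ← hAtw, ← hBdw]
      refine ⟨hBn, ?_⟩
      ext x
      rw [Finset.mem_sdiff, hS'def, Finset.mem_erase, ← hts]
      simp only [List.mem_toFinset, Finset.mem_union, Finset.mem_insert]
      constructor
      · intro hxB
        have hxM : x ≠ M := fun h => hMB (h ▸ hxB)
        have hxA : x ∉ A := fun h => hdisj x h x (List.mem_cons_of_mem _ hxB) rfl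
        exact ⟨⟨hxM, Or.inr (Or.inr hxB)⟩, fun h => hxA h⟩
      · rintro ⟨⟨hxM, hmem⟩, hxA⟩
        rcases hmem with h | h | h
        · exact absurd h hxA
        · exact absurd h hxM
        · exact h
  · -- left inverse
    rintro ⟨S₁, A, B⟩ hp
    simp only [Finset.mem_sigma, Finset.mem_powerset, Finset.mem_product] at hp
    obtain ⟨hsub, hA, hB⟩ := hp
    rw [mem_permsOf] at hA
    obtain ⟨hAn, hAt⟩ := hA
    have hAne : ∀ x ∈ A, x ≠ M := by
      intro x hx h
      subst h
      exact hMS' (hsub (hAt ▸ List.mem_toFinset.mpr hx))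
    have htw := takeWhile_ne_append A hAne B
    dsimp only
    rw [htw.1, htw.2]
    simp only [List.tail_cons]
    rw [hAt]
  · -- right inverse
    intro l hl
    rw [mem_permsOf] at hl
    obtain ⟨hn, ht⟩ := hl
    have hMl : M ∈ l := by rw [← List.mem_toFinset, ht]; exact hMS
    obtain ⟨A, B, hdec, hAtw, hBdw⟩ := exists_decomp hn hMl
    dsimp only
    rw [← hAtw, ← hBdw, ← hdec]
  · intro p _
    rfl

def FF (S : Finset ℕ) : Polynomial ℕ := ∑ l ∈ permsOf S, (X : Polynomial ℕ) ^ ldes l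

def GG (S : Finset ℕ) : Polynomial ℕ :=
  ∑ l ∈ permsOf S,
    if good l then (X : Polynomial ℕ) ^ ldes l * (1 + X) ^ (S.card - 1 - 2 * ldes l) else 0

lemma FF_empty : FF ∅ = 1 := by
  rw [FF, permsOf_empty, Finset.sum_singleton]
  simp [ldes]

lemma GG_empty : GG ∅ = 1 := by
  rw [GG, permsOf_empty, Finset.sum_singleton, if_pos good_nil]
  simp [ldes]

set_option maxHeartbeats 800000 in
lemma FF_eq_GG_aux : ∀ N : ℕ, ∀ S : Finset ℕ, S.card ≤ N → FF S = GG S := by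
  intro N
  induction N with
  | zero =>
    intro S hS
    rw [Finset.card_eq_zero.mp (Nat.le_zero.mp hS)]
    rw [FF_empty, GG_empty]
  | succ N ih =>
    intro S hcard
    rcases Finset.eq_empty_or_nonempty S with rfl | hS
    · rw [FF_empty, GG_empty]
    set M := S.max' hS with hMdef
    set S' := S.erase M with hS'def
    have hMS : M ∈ S := S.max'_mem hS
    have hcS' : S'.card = S.card - 1 := Finset.card_erase_of_mem hMS
    have hcS : S.card = S'.card + 1 := by
      rw [hcS']
      have := Finset.card_pos.mpr hS
      omega
    have hIH : ∀ T : Finset ℕ, T ⊆ S' → FF T = GG T := by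
      intro T hT
      refine ih T ?_
      have := Finset.card_le_card hT
      omega
    have hlt : ∀ x ∈ S', x < M := by
      intro x hx
      exact lt_of_le_of_ne (S.le_max' x (Finset.mem_of_mem_erase hx)) (Finset.ne_of_mem_erase hx)
    -- members of permsOf of subsets of S' have entries < M
    have hmem_lt : ∀ T : Finset ℕ, T ⊆ S' → ∀ A ∈ permsOf T, ∀ x ∈ A, x < M := by
      intro T hT A hA x hx
      rw [mem_permsOf] at hA
      exact hlt x (hT (hA.2 ▸ List.mem_toFinset.mpr hx))
    -- Step 1 : expansion of FF S
    have hF : FF S = ∑ S₁ ∈ S'.powerset,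
        FF S₁ * (FF (S' \ S₁) * (if S' \ S₁ = ∅ then 1 else X)) := by
      rw [FF, sum_split S hS]
      refine Finset.sum_congr rfl ?_
      intro S₁ hS₁
      rw [Finset.mem_powerset] at hS₁
      have h1 : ∀ A ∈ permsOf S₁, ∀ B ∈ permsOf (S' \ S₁),
          (X : Polynomial ℕ) ^ ldes (A ++ M :: B)
            = X ^ ldes A * (X ^ ldes B * (if S' \ S₁ = ∅ then 1 else X)) := by
        intro A hA B hB
        rw [ldes_append (hmem_lt S₁ hS₁ A hA) (hmem_lt _ Finset.sdiff_subset B hB)]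
        rw [pow_add, pow_add, mul_assoc]
        congr 2
        have hBe := eq_nil_iff_permsOf hB
        by_cases hc : S' \ S₁ = ∅
        · simp [hc, hBe.mpr hc]
        · have hBne : B ≠ [] := fun h => hc (hBe.mp h)
          simp [hc, hBne]
      rw [Finset.sum_congr rfl fun A hA => Finset.sum_congr rfl fun B hB => h1 A hA B hB]
      rw [← Finset.sum_mul_sum]
      rw [FF, FF]
      congr 1
      rw [Finset.sum_mul]
    have hpowmem : S' ∈ S'.powerset := Finset.mem_powerset_self S'
    -- Step 1' : extract the S₁ = S' term
    have hF' : FF S = FF S' + ∑ S₁ ∈ S'.powerset.erase S', FF S₁ * (FF (S' \ S₁) * X) := by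
      rw [hF, ← Finset.sum_erase_add _ _ hpowmem, Finset.sdiff_self, FF_empty]
      rw [if_pos rfl, mul_one, mul_one, add_comm]
      refine congrArg (FF S' + ·) ?_
      refine Finset.sum_congr rfl fun S₁ hS₁ => ?_
      rw [Finset.mem_erase] at hS₁
      have hne : S' \ S₁ ≠ ∅ := fun h =>
        hS₁.1 (le_antisymm (Finset.mem_powerset.mp hS₁.2) (Finset.sdiff_eq_empty_iff_subset.mp h))
      rw [if_neg hne]
    -- Step 2 : expansion of GG S
    have hG : GG S =
        (∑ A ∈ permsOf S',
          if good A then (X : Polynomial ℕ) ^ ldes A * (1 + X) ^ (S'.card - 2 * ldes A) else 0)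
        + ∑ S₁ ∈ S'.powerset.erase S',
            (if S₁ = ∅ then 0 else X * GG S₁ * GG (S' \ S₁)) := by
      rw [GG, sum_split S hS, ← Finset.sum_erase_add _ _ hpowmem, add_comm]
      congr 1
      · -- the S₁ = S' term
        rw [Finset.sdiff_self, permsOf_empty]
        refine Finset.sum_congr rfl fun A hA => ?_
        rw [Finset.sum_singleton]
        have hAlt := hmem_lt S' (subset_refl _) A hA
        have hg : good (A ++ M :: []) ↔ good A := by
          rw [good_append hAlt (by simp)]
          simp [good_nil]
        have hl : ldes (A ++ M :: []) = ldes A := by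
          rw [ldes_append hAlt (by simp)]; simp [ldes]
        have he : S.card - 1 - 2 * ldes A = S'.card - 2 * ldes A := by omega
        rw [← hMdef]; simp only [hl, hg, he]
      · -- the other terms
        refine Finset.sum_congr rfl fun S₁ hS₁ => ?_
        rw [Finset.mem_erase, Finset.mem_powerset] at hS₁
        obtain ⟨hne, hsub⟩ := hS₁
        have hd : S' \ S₁ ≠ ∅ := fun h =>
          hne (le_antisymm hsub (Finset.sdiff_eq_empty_iff_subset.mp h))
        have hAlt := hmem_lt S₁ hsub
        have hBlt := hmem_lt (S' \ S₁) Finset.sdiff_subset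
        by_cases h0 : S₁ = ∅
        · rw [if_pos h0]
          subst h0
          rw [permsOf_empty, Finset.sum_singleton]
          refine Finset.sum_eq_zero fun B hB => ?_
          have hBne : B ≠ [] := fun h => hd ((eq_nil_iff_permsOf hB).mp h)
          rw [if_neg]
          rcases B with _ | ⟨b, t⟩
          · exact absurd rfl hBne
          · intro hgood
            exact hgood.1 (hBlt _ hB b (by simp))
        · rw [if_neg h0]
          have key : ∀ A ∈ permsOf S₁, ∀ B ∈ permsOf (S' \ S₁),
              (if good (A ++ M :: B) then
                (X : Polynomial ℕ) ^ ldes (A ++ M :: B) *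
                  (1 + X) ^ (S.card - 1 - 2 * ldes (A ++ M :: B)) else 0)
              = (if good A then (X : Polynomial ℕ) ^ ldes A *
                    (1 + X) ^ (S₁.card - 1 - 2 * ldes A) else 0) *
                ((if good B then (X : Polynomial ℕ) ^ ldes B *
                    (1 + X) ^ ((S' \ S₁).card - 1 - 2 * ldes B) else 0) * X) := by
            intro A hA B hB
            have hAne : A ≠ [] := fun h => h0 ((eq_nil_iff_permsOf hA).mp h)
            have hBne : B ≠ [] := fun h => hd ((eq_nil_iff_permsOf hB).mp h)
            have hgg : good (A ++ M :: B) ↔ good A ∧ good B := by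
              rw [good_append (hAlt A hA) (hBlt B hB)]
              exact ⟨fun h => ⟨h.1, h.2.1⟩, fun h => ⟨h.1, h.2, fun _ => hAne⟩⟩
            have hll : ldes (A ++ M :: B) = ldes A + ldes B + 1 := by
              rw [ldes_append (hAlt A hA) (hBlt B hB), if_neg hBne]
            by_cases gA : good A
            · by_cases gB : good B
              · rw [if_pos (hgg.mpr ⟨gA, gB⟩), if_pos gA, if_pos gB, hll]
                have bA := good_bound gA hAne
                have bB := good_bound gB hBne
                rw [length_mem_permsOf hA] at bA
                rw [length_mem_permsOf hB] at bB
                have hcc := Finset.card_sdiff_add_card_eq_card hsub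
                have he : S.card - 1 - 2 * (ldes A + ldes B + 1)
                    = (S₁.card - 1 - 2 * ldes A) + ((S' \ S₁).card - 1 - 2 * ldes B) := by
                  omega
                rw [he, pow_add, pow_add, pow_add, pow_one]
                ring
              · rw [if_neg gB, if_neg (fun h => gB (hgg.mp h).2), zero_mul, mul_zero]
            · rw [if_neg gA, if_neg (fun h => gA (hgg.mp h).1), zero_mul]
          rw [Finset.sum_congr rfl fun A hA => Finset.sum_congr rfl fun B hB => key A hA B hB]
          rw [← Finset.sum_mul_sum]
          have hx : (∑ j ∈ permsOf (S' \ S₁),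
              ((if good j then (X : Polynomial ℕ) ^ ldes j *
                  (1 + X) ^ ((S' \ S₁).card - 1 - 2 * ldes j) else 0) * X))
              = GG (S' \ S₁) * X := by
            rw [GG, Finset.sum_mul]
          rw [hx, show (X : Polynomial ℕ) * GG S₁ * GG (S' \ S₁)
            = GG S₁ * (GG (S' \ S₁) * X) by ring]
          congr 1
    -- now combine
    by_cases hS'e : S' = ∅
    · rw [hF', hG, hS'e]
      simp only [Finset.powerset_empty, Finset.erase_singleton, Finset.sum_empty, add_zero]
      rw [FF_empty, permsOf_empty, Finset.sum_singleton, if_pos good_nil]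
      simp [ldes]
    · have h0mem : (∅ : Finset ℕ) ∈ S'.powerset.erase S' := by
        rw [Finset.mem_erase]
        exact ⟨fun h => hS'e h.symm, Finset.empty_mem_powerset S'⟩
      have hfirst : (∑ A ∈ permsOf S',
          if good A then (X : Polynomial ℕ) ^ ldes A * (1 + X) ^ (S'.card - 2 * ldes A) else 0)
          = (1 + X) * GG S' := by
        rw [GG, Finset.mul_sum]
        refine Finset.sum_congr rfl fun A hA => ?_
        by_cases gA : good A
        · rw [if_pos gA, if_pos gA]
          have hAne : A ≠ [] := fun h => hS'e ((eq_nil_iff_permsOf hA).mp h)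
          have bA := good_bound gA hAne
          rw [length_mem_permsOf hA] at bA
          have he : S'.card - 2 * ldes A = (S'.card - 1 - 2 * ldes A) + 1 := by omega
          rw [he, pow_add, pow_one]
          ring
        · rw [if_neg gA, if_neg gA, mul_zero]
      rw [hF', hG, hfirst]
      rw [← Finset.sum_erase_add _ _ h0mem, ← Finset.sum_erase_add _ _ h0mem]
      rw [if_pos rfl, add_zero, FF_empty, one_mul, Finset.sdiff_empty]
      have hrest : ∀ S₁ ∈ (S'.powerset.erase S').erase ∅,
          FF S₁ * (FF (S' \ S₁) * X) = (if S₁ = ∅ then 0 else X * GG S₁ * GG (S' \ S₁)) := by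
        intro S₁ hS₁
        rw [Finset.mem_erase, Finset.mem_erase, Finset.mem_powerset] at hS₁
        rw [if_neg hS₁.1]
        rw [hIH S₁ hS₁.2.2, hIH (S' \ S₁) Finset.sdiff_subset]
        ring
      rw [Finset.sum_congr rfl hrest, hIH S' (subset_refl _)]
      ring

lemma FF_eq_GG (S : Finset ℕ) : FF S = GG S := FF_eq_GG_aux S.card S le_rfl

end EGT

-- === bridge to permutations ===
namespace EGT

lemma length_word (n : ℕ) (w : Equiv.Perm (Fin n)) : (word n w).length = n :=
  List.length_ofFn

lemma ol_eq_getD (n : ℕ) (w : Equiv.Perm (Fin n)) (i : ℕ) :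
    ol n w i = (word n w).getD i 0 := by
  by_cases h : i < n
  · rw [ol, dif_pos h, List.getD_eq_getElem _ _ (by rw [length_word]; exact h)]
    simp [word]
  · rw [ol, dif_neg h, List.getD_eq_default _ _ (by rw [length_word]; omega)]

lemma desSet_eq (n : ℕ) (w : Equiv.Perm (Fin n)) : DesSet n w = dsetL (word n w) := by
  rw [DesSet, dsetL, length_word]
  ext i
  simp only [Finset.mem_filter, Finset.mem_range, ol_eq_getD]

lemma word_mem (n : ℕ) (w : Equiv.Perm (Fin n)) : word n w ∈ permsOf (Finset.range n) := by
  rw [mem_permsOf]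
  constructor
  · rw [show word n w = List.ofFn (fun i => (w i : ℕ)) from rfl, List.nodup_ofFn]
    exact fun i j h => w.injective (Fin.ext h)
  · ext x
    rw [List.mem_toFinset, show word n w = List.ofFn (fun i => (w i : ℕ)) from rfl,
      List.mem_ofFn, Finset.mem_range]
    constructor
    · rintro ⟨i, rfl⟩; exact (w i).2
    · intro hx
      exact ⟨w⁻¹ ⟨x, hx⟩, by simp⟩

lemma sum_word (n : ℕ) (f : List ℕ → Polynomial ℕ) :
    ∑ w : Equiv.Perm (Fin n), f (word n w) = ∑ l ∈ permsOf (Finset.range n), f l := by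
  refine Finset.sum_bij (fun w _ => word n w) (fun w _ => word_mem n w) ?_ ?_ (fun w _ => rfl)
  · intro w1 _ w2 _ h
    have h' : List.ofFn (fun i => (w1 i : ℕ)) = List.ofFn (fun i => (w2 i : ℕ)) := h
    rw [List.ofFn_inj] at h'
    exact Equiv.ext fun i => Fin.ext (congrFun h' i)
  · intro l hl
    rw [mem_permsOf] at hl
    obtain ⟨hn, ht⟩ := hl
    have hlen : l.length = n := by
      rw [← Finset.card_range n, ← ht, List.toFinset_card_of_nodup hn]
    have hmem : ∀ i : Fin n, l.get (Fin.cast hlen.symm i) < n := by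
      intro i
      have := List.get_mem l (Fin.cast hlen.symm i)
      rwa [← List.mem_toFinset, ht, Finset.mem_range] at this
    have hinj : Function.Injective (fun i : Fin n => (⟨l.get (Fin.cast hlen.symm i), hmem i⟩ : Fin n)) := by
      intro i j h
      have h2 : l.get (Fin.cast hlen.symm i) = l.get (Fin.cast hlen.symm j) := congrArg Fin.val h
      have h3 := hn.get_inj_iff.mp h2
      have h4 := congrArg Fin.val h3
      exact Fin.ext h4
    refine ⟨Equiv.ofBijective _ (Finite.injective_iff_bijective.mp hinj), Finset.mem_univ _, ?_⟩
    refine List.ext_getElem (by simp [word, hlen]) ?_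
    intro i h1 h2
    simp only [word, List.getElem_ofFn, Equiv.ofBijective_apply]
    rfl

end EGT

theorem eulerian_gamma_tilde (n : ℕ) :
    ∑ w : Equiv.Perm (Fin n), (X : Polynomial ℕ) ^ des n w =
      ∑ w ∈ Finset.univ.filter
          (fun w : Equiv.Perm (Fin n) => NoDoubleDescent n w ∧ NoInitialDescent n w),
        (X : Polynomial ℕ) ^ des n w * (1 + X) ^ (n - 1 - 2 * des n w) := by
  have hdes : ∀ w : Equiv.Perm (Fin n), des n w = EGT.ldes (word n w) := by
    intro w
    rw [des, EGT.desSet_eq, EGT.ldes_eq_card]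
  have hgood : ∀ w : Equiv.Perm (Fin n),
      (NoDoubleDescent n w ∧ NoInitialDescent n w) ↔ EGT.good (word n w) := by
    intro w
    rw [EGT.good_iff]
    unfold NoDoubleDescent NoInitialDescent
    rw [EGT.desSet_eq]
  calc ∑ w : Equiv.Perm (Fin n), (X : Polynomial ℕ) ^ des n w
      = EGT.FF (Finset.range n) := by
        rw [EGT.FF, ← EGT.sum_word n (fun l => (X : Polynomial ℕ) ^ EGT.ldes l)]
        exact Finset.sum_congr rfl fun w _ => by rw [hdes w]
    _ = EGT.GG (Finset.range n) := EGT.FF_eq_GG _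
    _ = _ := by
        rw [EGT.GG, ← EGT.sum_word n (fun l => if EGT.good l then
          (X : Polynomial ℕ) ^ EGT.ldes l *
            (1 + X) ^ ((Finset.range n).card - 1 - 2 * EGT.ldes l) else 0)]
        rw [Finset.sum_filter]
        refine Finset.sum_congr rfl fun w _ => ?_
        rw [Finset.card_range]
        by_cases h : NoDoubleDescent n w ∧ NoInitialDescent n w
        · rw [if_pos ((hgood w).mp h), if_pos h, hdes w]
        · rw [if_neg (fun hg => h ((hgood w).mpr hg)), if_neg h]
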